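/- If a string P occurs at positions i and j of a string T with 0 < j - i ≤ |P|/2, then j - i is a multiple of per(P). -/

import Mathlib

/-- `P` occurs at (0-indexed) position `i` of `T`. -/
def occursAt {α : Type*} (P T : List α) (i : ℕ) : Prop :=
  (T.drop i).take P.length = P

/-- `ρ` is a period of `P`. -/
def isPeriod {α : Type*} (P : List α) (ρ : ℕ) : Prop :=
  0 < ρ ∧ ∀ k, k + ρ < P.length → P[k]? = P[k + ρ]?

/-- The smallest period of `P`. -/
noncomputable def per {α : Type*} (P : List α) : ℕ :=
  sInf {ρ | isPeriod P ρ}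

/-- The fragment of `S` on (0-indexed, inclusive) positions `i..j`. -/
def frag {α : Type*} (S : List α) (i j : ℕ) : List α :=
  (S.drop i).take (j - i + 1)

lemma occursAt_get {α : Type*} {P T : List α} {i : ℕ} (h : occursAt P T i)
    {k : ℕ} (hk : k < P.length) : P[k]? = T[i + k]? := by
  conv_lhs => rw [← h]
  rw [List.getElem?_take_of_lt hk, List.getElem?_drop]

lemma period_of_occ {α : Type*} {P T : List α} {i j : ℕ} (hij : i < j)
    (hi : occursAt P T i) (hj : occursAt P T j) : isPeriod P (j - i) := by
  refine ⟨by omega, fun k hk => ?_⟩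
  have h1 : P[k]? = T[j + k]? := occursAt_get hj (by omega)
  have h2 : P[k + (j - i)]? = T[i + (k + (j - i))]? := occursAt_get hi hk
  have h3 : i + (k + (j - i)) = j + k := by omega
  rw [h2, h3, ← h1]

lemma period_sub {α : Type*} {P : List α} {p q : ℕ} (hp : isPeriod P p)
    (hq : isPeriod P q) (hpq : p < q) (hn : p + q ≤ P.length) :
    isPeriod P (q - p) := by
  obtain ⟨hp0, hp'⟩ := hp
  obtain ⟨hq0, hq'⟩ := hq
  refine ⟨by omega, fun k hk => ?_⟩
  by_cases h : k + q < P.length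
  · have e1 := hq' k h
    have e2 := hp' (k + (q - p)) (by omega)
    have h3 : k + (q - p) + p = k + q := by omega
    rw [h3] at e2
    rw [e2, ← e1]
  · have hkp : p ≤ k := by omega
    have e1 := hp' (k - p) (by omega)
    have e2 := hq' (k - p) (by omega)
    have h1 : k - p + p = k := by omega
    have h2 : k - p + q = k + (q - p) := by omega
    rw [h1] at e1
    rw [h2] at e2
    rw [← e1, e2]

lemma period_gcd {α : Type*} {P : List α} (p q : ℕ) (hp : isPeriod P p)
    (hq : isPeriod P q) (hn : p + q ≤ P.length) : isPeriod P (Nat.gcd p q) := by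
  obtain ⟨s, hs⟩ : ∃ s, p + q = s := ⟨_, rfl⟩
  induction s using Nat.strong_induction_on generalizing p q with
  | _ s ih =>
    subst hs
    rcases lt_trichotomy p q with h | h | h
    · have h1 := period_sub hp hq h hn
      have hp0 := hp.1
      have hlt : p + (q - p) < p + q := by omega
      have hle : p + (q - p) ≤ P.length := by omega
      have h2 := ih (p + (q - p)) hlt p (q - p) hp h1 hle rfl
      rwa [Nat.gcd_sub_self_right h.le] at h2
    · subst h
      rwa [Nat.gcd_self]
    · have hn' : q + p ≤ P.length := by omega
      have h1 := period_sub hq hp h hn'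
      have hq0 := hq.1
      have hlt : q + (p - q) < p + q := by omega
      have hle : q + (p - q) ≤ P.length := by omega
      have h2 := ih (q + (p - q)) hlt q (p - q) hq h1 hle rfl
      rwa [Nat.gcd_sub_self_right h.le, Nat.gcd_comm] at h2

/-- If `P` occurs at positions `i < j` with `j - i ≤ |P|/2`, then `j - i` is a
multiple of `per P`. -/
theorem close_occurrences_period_divides {α : Type*} (P T : List α)
    (hP : P ≠ []) (i j : ℕ) (hij : i < j) (hclose : 2 * (j - i) ≤ P.length)
    (hi : occursAt P T i) (hj : occursAt P T j) :
    per P ∣ (j - i) := by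
  have hd : isPeriod P (j - i) := period_of_occ hij hi hj
  have hper : isPeriod P (per P) := Nat.sInf_mem (⟨j - i, hd⟩ : Set.Nonempty {ρ | isPeriod P ρ})
  have hle : per P ≤ j - i := Nat.sInf_le hd
  have hg : isPeriod P (Nat.gcd (per P) (j - i)) :=
    period_gcd _ _ hper hd (by omega)
  have h1 : per P ≤ Nat.gcd (per P) (j - i) := Nat.sInf_le hg
  have h2 : Nat.gcd (per P) (j - i) ≤ per P := Nat.gcd_le_left _ hper.1
  have := Nat.gcd_dvd_right (per P) (j - i)
  rwa [le_antisymm h2 h1] at this
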